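/- Let (A,·,α,β) be a BiHom-associative superalgebra with α,β bijective and let R be a Rota-Baxter operator of weight −1 on it. Let ∘ be the product x∘y = R(x)·y − (−1)^{|x||y|}(α⁻¹β(y))·R(αβ⁻¹(x)) − x·y. Then R is a Rota-Baxter operator of weight −1 on (A,∘,α,β), i.e. R(x)∘R(y) = R(R(x)∘y + x∘R(y) − x∘y) for all homogeneous x,y. -/

import Mathlib

set_option synthInstance.maxHeartbeats 1000000
set_option maxHeartbeats 1000000

lemma invPres (K A : Type) [Field K] [AddCommGroup A] [Module K A]
    (𝒜 : ZMod 2 → Submodule K A) (hA : DirectSum.IsInternal 𝒜)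
    (e : A ≃ₗ[K] A) (he : ∀ i : ZMod 2, ∀ a ∈ 𝒜 i, e a ∈ 𝒜 i) :
    ∀ i : ZMod 2, ∀ a ∈ 𝒜 i, e.symm a ∈ 𝒜 i := by
  letI := hA.chooseDecomposition
  have key : ∀ c : A, ∀ k : ZMod 2,
      ((DirectSum.decompose 𝒜 (e c) k : A)) = e ((DirectSum.decompose 𝒜 c k : A)) := by
    refine DirectSum.Decomposition.inductionOn 𝒜 ?_ ?_ ?_
    · intro k; simp
    · intro l c k
      by_cases h : l = k
      · subst h
        rw [DirectSum.decompose_of_mem_same 𝒜 (he l c c.2),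
          DirectSum.decompose_of_mem_same 𝒜 c.2]
      · rw [DirectSum.decompose_of_mem_ne 𝒜 (he l c c.2) h,
          DirectSum.decompose_of_mem_ne 𝒜 c.2 h, map_zero]
    · intro c c' hc hc' k
      rw [map_add, DirectSum.decompose_add, DirectSum.decompose_add,
        DirectSum.add_apply, DirectSum.add_apply, Submodule.coe_add, Submodule.coe_add,
        map_add, hc k, hc' k]
  intro i a ha
  have hzero : ∀ k : ZMod 2, k ≠ i → DirectSum.decompose 𝒜 (e.symm a) k = 0 := by
    intro k hk
    have h1 : ((DirectSum.decompose 𝒜 a k : A)) = e ((DirectSum.decompose 𝒜 (e.symm a) k : A)) := by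
      have := key (e.symm a) k
      rwa [e.apply_symm_apply] at this
    rw [DirectSum.decompose_of_mem_ne 𝒜 ha (Ne.symm hk)] at h1
    have : ((DirectSum.decompose 𝒜 (e.symm a) k : A)) = 0 := by
      apply e.injective; rw [← h1, map_zero]
    exact Subtype.ext this
  have hb : DirectSum.decompose 𝒜 (e.symm a)
      = DirectSum.of (fun k => 𝒜 k) i (DirectSum.decompose 𝒜 (e.symm a) i) := by
    apply DFinsupp.ext
    intro k
    by_cases h : k = i
    · subst h; rw [DirectSum.of_eq_same]
    · rw [hzero k h, DirectSum.of_eq_of_ne _ _ _ h]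
  have : e.symm a = ((DirectSum.decompose 𝒜 (e.symm a) i : A)) := by
    conv_lhs => rw [← (DirectSum.decompose 𝒜).symm_apply_apply (e.symm a), hb,
      DirectSum.decompose_symm_of]
  rw [this]
  exact (DirectSum.decompose 𝒜 (e.symm a) i).2

/-!
STATEMENT 8: If `(A,·,α,β)` is a BiHom-associative superalgebra with `α, β` bijective and
`R` is a Rota-Baxter operator of weight `−1` on it, then `R` is still a Rota-Baxter operator
of weight `−1` on the product `x∘y = R(x)·y − (−1)^{|x||y|}(α⁻¹β(y))·R(αβ⁻¹(x)) − x·y`.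
-/
theorem statement8
    (K : Type) [Field K] [CharZero K]
    (A : Type) [AddCommGroup A] [Module K A]
    (𝒜 : ZMod 2 → Submodule K A)
    (hA : DirectSum.IsInternal 𝒜)
    (μ : A →ₗ[K] A →ₗ[K] A)
    (α β : A ≃ₗ[K] A)
    (hcomm : ∀ a, α (β a) = β (α a))
    (hαe : ∀ i : ZMod 2, ∀ a ∈ 𝒜 i, α a ∈ 𝒜 i)
    (hβe : ∀ i : ZMod 2, ∀ a ∈ 𝒜 i, β a ∈ 𝒜 i)
    (hμe : ∀ i j : ZMod 2, ∀ a ∈ 𝒜 i, ∀ b ∈ 𝒜 j, μ a b ∈ 𝒜 (i + j))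
    (hαm : ∀ a b : A, α (μ a b) = μ (α a) (α b))
    (hβm : ∀ a b : A, β (μ a b) = μ (β a) (β b))
    (hass : ∀ a b c : A, μ (α a) (μ b c) = μ (μ a b) (β c))
    -- R is a Rota-Baxter operator of weight −1
    (R : A →ₗ[K] A)
    (hRe : ∀ i : ZMod 2, ∀ a ∈ 𝒜 i, R a ∈ 𝒜 i)
    (hRα : ∀ a, R (α a) = α (R a))
    (hRβ : ∀ a, R (β a) = β (R a))
    (hRB : ∀ i j : ZMod 2, ∀ x ∈ 𝒜 i, ∀ y ∈ 𝒜 j,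
      μ (R x) (R y) = R (μ (R x) y + μ x (R y) - μ x y))
    -- the product ∘
    (m : ZMod 2 → ZMod 2 → A → A → A)
    (hm : ∀ i j x y, m i j x y
      = μ (R x) y
        - ((-1 : K) ^ (i.val * j.val)) • μ (α.symm (β y)) (R (α (β.symm x)))
        - μ x y) :
    -- R is a Rota-Baxter operator of weight −1 on `(A,∘,α,β)`:
    ∀ i j : ZMod 2, ∀ x ∈ 𝒜 i, ∀ y ∈ 𝒜 j,
      m i j (R x) (R y) = R (m i j (R x) y + m i j x (R y) - m i j x y) := by
  intro i j x hx y hy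
  have hRαs : ∀ a, R (α.symm a) = α.symm (R a) := by
    intro a; apply α.injective
    rw [← hRα, α.apply_symm_apply, α.apply_symm_apply]
  have hRβs : ∀ a, R (β.symm a) = β.symm (R a) := by
    intro a; apply β.injective
    rw [← hRβ, β.apply_symm_apply, β.apply_symm_apply]
  have hαs := invPres K A 𝒜 hA α hαe
  have hβs := invPres K A 𝒜 hA β hβe
  have hu : α.symm (β y) ∈ 𝒜 j := hαs j _ (hβe j y hy)
  have hv : α (β.symm x) ∈ 𝒜 i := hαe i _ (hβs i x hx)
  have huR : α.symm (β (R y)) = R (α.symm (β y)) := by rw [hRαs, hRβ]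
  have hvR : α (β.symm (R x)) = R (α (β.symm x)) := by rw [hRα, hRβs]
  have e1 := hRB i j (R x) (hRe i x hx) y hy
  have e2 := hRB j i _ hu (R (α (β.symm x))) (hRe i _ hv)
  have e3 := hRB i j x hx y hy
  rw [hm i j (R x) (R y), hm i j (R x) y, hm i j x (R y), hm i j x y, huR, hvR]
  simp only [map_add, map_sub, map_smul] at e1 e2 e3 ⊢
  linear_combination (norm := module) e1 - ((-1 : K) ^ (i.val * j.val)) • e2 - e3
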